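/- arXiv:1101.0777 — 4 statements merged into one kernel-verified Lean document; each statement's English description precedes it below -/
import Mathlib

section
/- If a square integer matrix M contains a square submatrix in which every row sum and every column sum is even but the total sum of all entries of the submatrix is not divisible by 4, then M is not totally unimodular. -/
open Matrix Finset

namespace CamionAux

/-- An integer in the range of `SignType.cast` is `0`, `1`, or `-1`. -/
lemma mem_signrange {x : ℤ} (h : x ∈ Set.range (SignType.cast : SignType → ℤ)) :
    x = 0 ∨ x = 1 ∨ x = -1 := by
  obtain ⟨s, rfl⟩ := h
  cases s <;> simp

/-- Mod 2, a sum `∑ c t * v t` equals the sum of `v t` over the odd coefficients. -/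
lemma dvd_sub_filter {α : Type*} [DecidableEq α] (c v : α → ℤ) (s : Finset α) :
    (2:ℤ) ∣ ((∑ t ∈ s, c t * v t) - ∑ t ∈ s.filter (fun t => ¬ (2:ℤ) ∣ c t), v t) := by
  rw [Finset.sum_filter, ← Finset.sum_sub_distrib]
  refine Finset.dvd_sum fun t _ => ?_
  by_cases h : (2:ℤ) ∣ c t
  · simp only [h, not_true, if_false, if_neg]
    simpa using h.mul_right (v t)
  · simp only [h, not_false_iff, if_pos, if_true]
    have : (2:ℤ) ∣ (c t - 1) := by
      rcases Int.even_or_odd (c t) with he | ho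
      · exact absurd (even_iff_two_dvd.mp he) h
      · obtain ⟨k, hk⟩ := ho; exact ⟨k, by omega⟩
    have := this.mul_right (v t)
    calc (2:ℤ) ∣ (c t - 1) * v t := this
    _ = c t * v t - v t := by ring

/-- Descent: from a nonzero integer kernel vector we get a kernel vector with an odd coord. -/
lemma descent {m : Type*} [Fintype m] {r : ℕ} (B : Matrix m (Fin r) ℤ) :
    ∀ N : ℕ, ∀ c : Fin r → ℤ, c ≠ 0 → (∀ j, (c j).natAbs ≤ N) →
      (∀ i, ∑ j, B i j * c j = 0) →
      ∃ c' : Fin r → ℤ, (∀ i, ∑ j, B i j * c' j = 0) ∧ ∃ j, ¬ (2:ℤ) ∣ c' j := by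
  intro N
  induction N using Nat.strong_induction_on with
  | _ N ih =>
    intro c hc hbound hker
    by_cases hodd : ∃ j, ¬ (2:ℤ) ∣ c j
    · exact ⟨c, hker, hodd⟩
    · push_neg at hodd
      obtain ⟨j₁, hj₁⟩ : ∃ j, c j ≠ 0 := by
        by_contra h; push_neg at h; exact hc (funext h)
      have hN : 1 ≤ N := le_trans (by omega) (hbound j₁)
      choose c' hc' using hodd
      have hc'ne : c' ≠ 0 := by
        intro h
        apply hj₁
        have := hc' j₁
        rw [h] at this; simpa using this
      refine ih (N/2) (by omega) c' hc'ne ?_ ?_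
      · intro j
        have h1 := hbound j
        have h2 := hc' j
        have : (c j).natAbs = 2 * (c' j).natAbs := by
          rw [h2, Int.natAbs_mul]; rfl
        omega
      · intro i
        have h0 := hker i
        have : ∑ j, B i j * c j = 2 * ∑ j, B i j * c' j := by
          rw [Finset.mul_sum]
          refine Finset.sum_congr rfl fun j _ => ?_
          rw [hc' j]; ring
        rw [this] at h0
        exact (mul_eq_zero.mp h0).resolve_left (by norm_num)

/-- A square integer matrix in which every row sum is even has even determinant. -/
lemma two_dvd_det {s : ℕ} (hs : 0 < s) (N : Matrix (Fin s) (Fin s) ℤ)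
    (h : ∀ i, Even (∑ j, N i j)) : (2:ℤ) ∣ N.det := by
  set N2 : Matrix (Fin s) (Fin s) (ZMod 2) := N.map (Int.castRingHom (ZMod 2)) with hN2
  have hzero : ∀ i, (∑ j, N2 i j) = 0 := by
    intro i
    have h1 : ((∑ j, N i j : ℤ) : ZMod 2) = 0 := by
      rw [ZMod.intCast_zmod_eq_zero_iff_dvd]
      exact_mod_cast even_iff_two_dvd.mp (h i)
    calc ∑ j, N2 i j = ((∑ j, N i j : ℤ) : ZMod 2) := by
          rw [Int.cast_sum]
          exact Finset.sum_congr rfl fun j _ => by simp [hN2]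
      _ = 0 := h1
  have hdet2 : N2.det = 0 := by
    let j₀ : Fin s := ⟨0, hs⟩
    have key := Matrix.det_updateCol_sum N2 j₀ (fun _ => (1 : ZMod 2))
    simp only [one_smul, smul_eq_mul, one_mul] at key
    rw [← key]
    apply Matrix.det_eq_zero_of_column_eq_zero j₀
    intro i
    rw [Matrix.updateCol_self]
    exact hzero i
  have h2 : ((N.det : ℤ) : ZMod 2) = 0 := by
    have : ((N.det : ℤ) : ZMod 2) = (Int.castRingHom (ZMod 2)) N.det := rfl
    rw [this, RingHom.map_det, RingHom.mapMatrix_apply, ← hN2, hdet2]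
  exact_mod_cast (ZMod.intCast_zmod_eq_zero_iff_dvd N.det 2).mp h2

set_option maxHeartbeats 1000000 in
/-- If the columns of a rational matrix are linearly independent (trivial kernel),
then some square row-submatrix has nonzero determinant. -/
lemma rowPick {m : Type*} [Fintype m] [DecidableEq m] {r : ℕ} (B : Matrix m (Fin r) ℚ)
    (h : ∀ c : Fin r → ℚ, (∀ i, ∑ j, B i j * c j = 0) → c = 0) :
    ∃ ρ : Fin r → m, Function.Injective ρ ∧ (B.submatrix ρ id).det ≠ 0 := by
  classical
  have hinj : Function.Injective B.mulVecLin := by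
    rw [← LinearMap.ker_eq_bot, LinearMap.ker_eq_bot']
    intro c hc
    apply h
    intro i
    have h0 := congrFun hc i
    rw [Matrix.mulVecLin_apply] at h0
    simpa [Matrix.mulVec, dotProduct] using h0
  have hrank : B.rank = r := by
    have h1 := LinearMap.finrank_range_of_inj hinj
    rw [Matrix.rank, h1, Module.finrank_fin_fun]
  have hspanrank : Module.finrank ℚ (Submodule.span ℚ (Set.range B)) = r := by
    exact (Matrix.rank_eq_finrank_span_row B).symm.trans hrank
  obtain ⟨s, hsub, hspan2, hli⟩ := exists_linearIndependent ℚ (Set.range B)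
  have hspan : Submodule.span ℚ s = ⊤ := by
    apply Submodule.eq_top_of_finrank_eq
    rw [hspan2, hspanrank, Module.finrank_fin_fun]
  have hbasis : Nonempty (Module.Basis s ℚ (Fin r → ℚ)) := by
    refine ⟨Module.Basis.mk hli ?_⟩
    rw [Subtype.range_coe]
    rw [hspan]
  obtain ⟨b⟩ := hbasis
  have : FiniteDimensional ℚ (Fin r → ℚ) := by infer_instance
  have hfin : s.Finite := hli.set_finite_of_isNoetherian
  have : Fintype s := hfin.fintype
  have hcard : Fintype.card s = r := by
    rw [← Module.finrank_eq_card_basis b, Module.finrank_fin_fun]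
  let e : Fin r ≃ s := (Fintype.equivFinOfCardEq hcard).symm
  have hchoose : ∀ v : s, ∃ i : m, B i = (v : Fin r → ℚ) := by
    intro v
    exact hsub v.2
  choose φ hφ using hchoose
  refine ⟨fun t => φ (e t), ?_, ?_⟩
  · intro a b' hab
    simp only at hab
    apply e.injective
    apply Subtype.ext
    rw [← hφ (e a), ← hφ (e b'), hab]
  · have hrows : LinearIndependent ℚ (fun t : Fin r => (B.submatrix (fun t => φ (e t)) id) t) := by
      have : (fun t : Fin r => (B.submatrix (fun t => φ (e t)) id) t)
          = (fun v : s => (v : Fin r → ℚ)) ∘ e := by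
        funext t
        ext j
        simp [Matrix.submatrix_apply, hφ (e t)]
      rw [this]
      exact hli.comp e e.injective
    have hunit := Matrix.linearIndependent_rows_iff_isUnit.mp hrows
    have hdet : IsUnit (B.submatrix (fun t => φ (e t)) id).det :=
      (Matrix.isUnit_iff_isUnit_det _).mp hunit
    exact hdet.ne_zero
    
/-- clearing denominators: an integer matrix with trivial integer kernel has trivial ℚ-kernel. -/
lemma qker_of_intker {m : Type*} [Fintype m] {r : ℕ} (B : Matrix m (Fin r) ℤ)
    (h : ∀ z : Fin r → ℤ, (∀ i, ∑ j, B i j * z j = 0) → z = 0)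
    (c : Fin r → ℚ) (hc : ∀ i, ∑ j, (B i j : ℚ) * c j = 0) : c = 0 := by
  classical
  set d : ℤ := ∏ j, ((c j).den : ℤ) with hd
  have hdj : ∀ j, ((c j).den : ℤ) ∣ d := fun j => Finset.dvd_prod_of_mem _ (mem_univ j)
  have hdpos : 0 < d := Finset.prod_pos (fun j _ => by exact_mod_cast (c j).den_pos)
  have hdne : (d : ℚ) ≠ 0 := by exact_mod_cast hdpos.ne'
  set z : Fin r → ℤ := fun j => (c j).num * (d / ((c j).den : ℤ)) with hzdef
  have hz : ∀ j, (z j : ℚ) = c j * (d : ℚ) := by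
    intro j
    have hden : ((c j).den : ℚ) ≠ 0 := by exact_mod_cast (c j).den_pos.ne'
    have h1 : (d / ((c j).den : ℤ)) * ((c j).den : ℤ) = d := Int.ediv_mul_cancel (hdj j)
    have h2' : z j * ((c j).den : ℤ) = (c j).num * d := by
      simp only [hzdef]
      rw [mul_assoc, h1]
    have h2 : (z j : ℚ) * ((c j).den : ℚ) = ((c j).num : ℚ) * (d : ℚ) := by
      exact_mod_cast h2' 
    have h4 : c j * ((c j).den : ℚ) = ((c j).num : ℚ) :=
      (eq_div_iff hden).mp (Rat.num_div_den (c j)).symm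
    have h3 : c j * (d:ℚ) * ((c j).den : ℚ) = ((c j).num : ℚ) * (d : ℚ) := by
      rw [mul_right_comm, h4]
    have := h2.trans h3.symm
    exact mul_right_cancel₀ hden this
  have hkz : ∀ i, ∑ j, B i j * z j = 0 := by
    intro i
    have : ((∑ j, B i j * z j : ℤ) : ℚ) = 0 := by
      push_cast
      calc (∑ j, (B i j : ℚ) * (z j : ℚ)) = ∑ j, (B i j : ℚ) * (c j * d) := by
            refine Finset.sum_congr rfl fun j _ => by rw [hz j]
        _ = (∑ j, (B i j : ℚ) * c j) * d := by
            rw [Finset.sum_mul]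
            exact Finset.sum_congr rfl fun j _ => by ring
        _ = 0 := by rw [hc i]; ring
    exact_mod_cast this
  have hz0 := h z hkz
  funext j
  have : (z j : ℚ) = 0 := by rw [hz0]; simp
  rw [hz j] at this
  rcases mul_eq_zero.mp this with h' | h'
  · exact h'
  · exact absurd h' hdne

set_option maxHeartbeats 2000000 in
/-- **Core construction.** If `A` is a TU matrix with `r+1` columns, all of whose row sums are
even, and no proper nonempty column subset has all partial row sums even, then there is a
`±1` vector in the kernel (acting on columns). -/
lemma CC {m : Type*} [Fintype m] [DecidableEq m] {r : ℕ} (A : Matrix m (Fin (r+1)) ℤ)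
    (hA : A.IsTotallyUnimodular)
    (hrow : ∀ i, Even (∑ j, A i j))
    (hmin : ∀ T : Finset (Fin (r+1)), T.Nonempty → T ≠ Finset.univ →
      ∃ i, ¬ Even (∑ j ∈ T, A i j)) :
    ∃ ε : Fin (r+1) → ℤ, (∀ j, ε j = 1 ∨ ε j = -1) ∧ ∀ i, ∑ j, A i j * ε j = 0 := by
  classical
  set lst : Fin (r+1) := Fin.last r with hlst
  set B : Matrix m (Fin r) ℤ := Matrix.of (fun i t => A i (Fin.castSucc t)) with hB
  -- the integer kernel of the first r columns is trivial
  have hker : ∀ z : Fin r → ℤ, (∀ i, ∑ t, B i t * z t = 0) → z = 0 := by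
    intro z hz
    by_contra hzne
    obtain ⟨c', hc'ker, t₁, hodd⟩ := descent B (∑ t, (z t).natAbs) z hzne
      (fun t => Finset.single_le_sum (f := fun t => (z t).natAbs)
        (fun _ _ => Nat.zero_le _) (Finset.mem_univ t)) hz
    set T : Finset (Fin (r+1)) :=
      (Finset.univ.filter (fun t => ¬ (2:ℤ) ∣ c' t)).image Fin.castSucc with hT
    have hTne : T.Nonempty := by
      refine ⟨Fin.castSucc t₁, ?_⟩
      rw [hT]
      exact Finset.mem_image_of_mem _ (Finset.mem_filter.mpr ⟨Finset.mem_univ _, hodd⟩)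
    have hTnu : T ≠ Finset.univ := by
      intro hTu
      have : lst ∈ T := hTu ▸ Finset.mem_univ lst
      rw [hT] at this
      obtain ⟨x, -, hx⟩ := Finset.mem_image.mp this
      exact (Fin.castSucc_lt_last x).ne hx
    obtain ⟨i, hi⟩ := hmin T hTne hTnu
    apply hi
    rw [even_iff_two_dvd]
    have hsum1 : ∑ j ∈ T, A i j
        = ∑ t ∈ Finset.univ.filter (fun t => ¬ (2:ℤ) ∣ c' t), B i t := by
      rw [hT]
      rw [Finset.sum_image (fun a _ b _ hab => Fin.castSucc_injective r hab)]
      rfl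
    rw [hsum1]
    have hd := dvd_sub_filter c' (fun t => B i t) Finset.univ
    have hc0 : ∑ t, c' t * B i t = 0 := by
      rw [← hc'ker i]
      exact Finset.sum_congr rfl fun t _ => mul_comm _ _
    rw [hc0, zero_sub, dvd_neg] at hd
    exact hd
  -- pick rows making the first r columns invertible
  have hq : ∀ c : Fin r → ℚ, (∀ i, ∑ j, (B.map (Int.cast : ℤ → ℚ)) i j * c j = 0) → c = 0 := by
    intro c hc
    refine qker_of_intker B hker c fun i => ?_
    simpa [Matrix.map_apply] using hc i
  obtain ⟨ρ, hρinj, hρdet⟩ := rowPick (B.map (Int.cast : ℤ → ℚ)) hq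
  set B₀ : Matrix (Fin r) (Fin r) ℤ := B.submatrix ρ id with hB₀
  have hdet0 : B₀.det ≠ 0 := by
    intro h0
    apply hρdet
    have : (B.map (Int.cast : ℤ → ℚ)).submatrix ρ id = B₀.map (Int.cast : ℤ → ℚ) := by
      ext i j; simp [hB₀, Matrix.map_apply]
    rw [this]
    have := (Int.castRingHom ℚ).map_det B₀
    rw [h0] at this
    simpa using this.symm
  have hd : B₀.det = 1 ∨ B₀.det = -1 := by
    have hmem := (Matrix.isTotallyUnimodular_iff A).mp hA r ρ Fin.castSucc
    have hBsub : A.submatrix ρ Fin.castSucc = B₀ := by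
      ext i j; simp [hB₀, hB]
    rw [hBsub] at hmem
    rcases mem_signrange hmem with h | h | h
    · exact absurd h hdet0
    · exact Or.inl h
    · exact Or.inr h
  set d : ℤ := B₀.det with hdd
  have hd2 : d * d = 1 := by rcases hd with h | h <;> rw [h] <;> norm_num
  set b : Fin r → ℤ := fun t => - A (ρ t) lst with hbdef
  set x : Fin r → ℤ := d • (Matrix.cramer B₀ b) with hx
  have hxsol : B₀ *ᵥ x = b := by
    rw [hx, Matrix.mulVec_smul, Matrix.mulVec_cramer, smul_smul, ← hdd, hd2, one_smul]
  have hxmem : ∀ t, x t = 0 ∨ x t = 1 ∨ x t = -1 := by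
    intro t
    have hb' : b = (-1 : ℤ) • (fun t' => A (ρ t') lst) := by
      funext t'; simp [hbdef]
    have hupd : B₀.updateCol t (fun t' => A (ρ t') lst)
        = A.submatrix ρ (Function.update Fin.castSucc t lst) := by
      ext i j
      rw [Matrix.updateCol_apply, Matrix.submatrix_apply, Function.update_apply]
      by_cases hj : j = t <;> simp [hj, hB₀, hB]
    have hcr : Matrix.cramer B₀ b t
        = -1 * (A.submatrix ρ (Function.update Fin.castSucc t lst)).det := by
      rw [Matrix.cramer_apply, hb', Matrix.det_updateCol_smul, hupd]
    have hmem := (Matrix.isTotallyUnimodular_iff A).mp hA r ρ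
      (Function.update Fin.castSucc t lst)
    have hxt : x t = d * (-1 * (A.submatrix ρ (Function.update Fin.castSucc t lst)).det) := by
      rw [hx, Pi.smul_apply, smul_eq_mul, hcr]
    rcases mem_signrange hmem with h | h | h <;> rcases hd with h' | h' <;>
      rw [hxt, h, h'] <;> norm_num
  set z : Fin (r+1) → ℤ := Fin.snoc x 1 with hz
  have hzc : ∀ t, z (Fin.castSucc t) = x t := fun t => by rw [hz]; exact Fin.snoc_castSucc _ _ _
  have hzl : z lst = 1 := by rw [hz, hlst]; exact Fin.snoc_last _ _
  have hzmem : ∀ j, z j = 0 ∨ z j = 1 ∨ z j = -1 := by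
    intro j
    induction j using Fin.lastCases with
    | last => rw [← hlst, hzl]; exact Or.inr (Or.inl rfl)
    | cast t => rw [hzc]; exact hxmem t
  have hρrow : ∀ t : Fin r, ∑ j, A (ρ t) j * z j = 0 := by
    intro t
    rw [Fin.sum_univ_castSucc]
    have h6 : (B₀ *ᵥ x) t = b t := congrFun hxsol t
    have h7 : ∑ u, A (ρ t) (Fin.castSucc u) * x u = - A (ρ t) lst := by
      have h6' : ∑ u, A (ρ t) (Fin.castSucc u) * x u = b t := by
        rw [← h6]
        simp [Matrix.mulVec, dotProduct, hB₀, hB]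
      rw [h6', hbdef]
    simp only [hzc, ← hlst, hzl, mul_one]
    rw [h7]
    ring
  have hz0 : ∀ i, ∑ j, A i j * z j = 0 := by
    intro i
    set N : Matrix (Fin (r+1)) (Fin (r+1)) ℤ := A.submatrix (Fin.snoc ρ i) id with hN
    have hdetN : N.det = 0 := by
      by_cases hinj2 : Function.Injective (Fin.snoc ρ i : Fin (r+1) → m)
      · have hrN : ∀ u, Even (∑ j, N u j) := by
          intro u
          have := hrow ((Fin.snoc ρ i : Fin (r+1) → m) u)
          simpa [hN] using this
        have h2d := two_dvd_det (Nat.succ_pos r) N hrN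
        rcases mem_signrange ((Matrix.isTotallyUnimodular_iff A).mp hA (r+1)
          (Fin.snoc ρ i) id) with h | h | h
        · exact h
        · rw [← hN] at h; rw [h] at h2d; norm_num at h2d
        · rw [← hN] at h; rw [h] at h2d; norm_num at h2d
      · obtain ⟨u₁, u₂, he, hne⟩ := Function.not_injective_iff.mp hinj2
        refine Matrix.det_zero_of_row_eq hne ?_
        funext j
        simp [hN, he]
    obtain ⟨w, hwne, hw⟩ := Matrix.exists_mulVec_eq_zero_iff.mpr hdetN
    have hw1 : ∀ t : Fin r, ∑ j, A (ρ t) j * w j = 0 := by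
      intro t
      have := congrFun hw (Fin.castSucc t)
      simpa [hN, Matrix.mulVec, dotProduct] using this
    have hw2 : ∑ j, A i j * w j = 0 := by
      have := congrFun hw lst
      simpa [hN, Matrix.mulVec, dotProduct, hlst] using this
    set u : Fin (r+1) → ℤ := fun j => w lst * z j - w j with hu
    have hulst : u lst = 0 := by rw [hu]; simp [hzl]
    have hu1 : ∀ t : Fin r, ∑ j, A (ρ t) j * u j = 0 := by
      intro t
      have e1 : ∑ j, A (ρ t) j * u j
          = w lst * (∑ j, A (ρ t) j * z j) - ∑ j, A (ρ t) j * w j := by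
        rw [Finset.mul_sum, ← Finset.sum_sub_distrib]
        exact Finset.sum_congr rfl fun j _ => by rw [hu]; ring
      rw [e1, hρrow t, hw1 t]; ring
    have hu0 : ∀ j, u j = 0 := by
      have hcs : ∀ t : Fin r, u (Fin.castSucc t) = 0 := by
        set u' : Fin r → ℤ := fun t => u (Fin.castSucc t) with hu'
        have hBu : B₀ *ᵥ u' = 0 := by
          funext t
          have := hu1 t
          rw [Fin.sum_univ_castSucc] at this
          rw [← hlst] at this
          rw [hulst, mul_zero, add_zero] at this
          simpa [Matrix.mulVec, dotProduct, hB₀, hB, hu'] using this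
        by_contra hcon
        push_neg at hcon
        obtain ⟨t, ht⟩ := hcon
        have : u' ≠ 0 := by
          intro h0; exact ht (congrFun h0 t)
        exact hdet0 (Matrix.exists_mulVec_eq_zero_iff.mp ⟨u', this, hBu⟩)
      intro j
      induction j using Fin.lastCases with
      | last => rw [← hlst]; exact hulst
      | cast t => exact hcs t
    have hweq : ∀ j, w j = w lst * z j := by
      intro j
      have h9 := hu0 j
      rw [hu] at h9
      simp only at h9
      linarith
    have hwlstne : w lst ≠ 0 := by
      intro h0
      apply hwne
      funext j
      rw [hweq j, h0, zero_mul, Pi.zero_apply]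
    have : w lst * (∑ j, A i j * z j) = 0 := by
      rw [Finset.mul_sum, ← hw2]
      exact Finset.sum_congr rfl fun j _ => by rw [hweq j]; ring
    exact (mul_eq_zero.mp this).resolve_left hwlstne
  -- full support
  refine ⟨z, ?_, hz0⟩
  intro j
  have hjodd : ¬ (2:ℤ) ∣ z j := by
    by_contra hjeven
    set T : Finset (Fin (r+1)) := Finset.univ.filter (fun j' => ¬ (2:ℤ) ∣ z j') with hT
    have hTne : T.Nonempty := by
      refine ⟨lst, ?_⟩
      rw [hT]
      refine Finset.mem_filter.mpr ⟨Finset.mem_univ _, ?_⟩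
      rw [hzl]; norm_num
    have hTnu : T ≠ Finset.univ := by
      intro hTu
      have : j ∈ T := hTu ▸ Finset.mem_univ j
      rw [hT] at this
      exact (Finset.mem_filter.mp this).2 hjeven
    obtain ⟨i, hi⟩ := hmin T hTne hTnu
    apply hi
    rw [even_iff_two_dvd]
    have hd' := dvd_sub_filter z (fun j' => A i j') Finset.univ
    have hc0 : ∑ j', z j' * A i j' = 0 := by
      rw [← hz0 i]
      exact Finset.sum_congr rfl fun j' _ => mul_comm _ _
    rw [hc0, zero_sub, dvd_neg] at hd'
    exact hd'
  rcases hzmem j with h | h | h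
  · exact absurd (h ▸ dvd_zero 2) hjodd
  · exact Or.inl h
  · exact Or.inr h

set_option maxHeartbeats 2000000 in
/-- **Key lemma.** A TU integer matrix all of whose row sums are even admits a `±1`
column-combination vector in the kernel. -/
lemma KL {m : Type*} [Fintype m] [DecidableEq m] : ∀ s : ℕ, ∀ A : Matrix m (Fin s) ℤ,
    A.IsTotallyUnimodular → (∀ i, Even (∑ j, A i j)) →
    ∃ ε : Fin s → ℤ, (∀ j, ε j = 1 ∨ ε j = -1) ∧ ∀ i, ∑ j, A i j * ε j = 0 := by
  intro s
  induction s using Nat.strong_induction_on with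
  | _ s ih =>
    intro A hA hrow
    rcases Nat.eq_zero_or_pos s with rfl | hs
    · exact ⟨fun _ => 1, fun j => j.elim0, fun i => by simp⟩
    classical
    have hP : ∃ t, 0 < t ∧ ∃ ι : Fin t → Fin s, Function.Injective ι ∧
        ∀ i, Even (∑ u, A i (ι u)) :=
      ⟨s, hs, id, Function.injective_id, fun i => by simpa using hrow i⟩
    obtain ⟨ht₀pos, ι, hιinj, heven⟩ := Nat.find_spec hP
    obtain ⟨r, hr⟩ : ∃ r, r + 1 = Nat.find hP := ⟨Nat.find hP - 1, by omega⟩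
    set ι' : Fin (r+1) → Fin s := ι ∘ (finCongr hr) with hι'
    have hι'inj : Function.Injective ι' := hιinj.comp (finCongr hr).injective
    have hcardle : r + 1 ≤ s := by
      have := Fintype.card_le_of_injective ι' hι'inj
      simpa using this
    set A' : Matrix m (Fin (r+1)) ℤ := A.submatrix id ι' with hA'
    have hA'tu : A'.IsTotallyUnimodular := hA.submatrix id ι'
    have hrow' : ∀ i, Even (∑ u, A' i u) := by
      intro i
      have : ∑ u : Fin (r+1), A' i u = ∑ u : Fin (Nat.find hP), A i (ι u) :=
        Fintype.sum_equiv (finCongr hr) _ _ (fun u => rfl)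
      rw [this]
      exact heven i
    have hmin' : ∀ T : Finset (Fin (r+1)), T.Nonempty → T ≠ Finset.univ →
        ∃ i, ¬ Even (∑ j ∈ T, A' i j) := by
      intro T hTne hTnu
      by_contra hno
      push_neg at hno
      set q := T.card with hq
      have hqpos : 0 < q := Finset.card_pos.mpr hTne
      have hqlt : q < Nat.find hP := by
        have h3 : T ⊂ Finset.univ := Finset.ssubset_univ_iff.mpr hTnu
        have h4 := Finset.card_lt_card h3
        rw [Finset.card_univ, Fintype.card_fin] at h4
        omega
      have : ¬ (0 < q ∧ ∃ κ : Fin q → Fin s, Function.Injective κ ∧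
          ∀ i, Even (∑ u, A i (κ u))) := Nat.find_min hP hqlt
      apply this
      refine ⟨hqpos, fun u => ι' ((T.orderIsoOfFin hq.symm u) : Fin (r+1)), ?_, ?_⟩
      · intro a b hab
        simp only at hab
        have := hι'inj hab
        exact (T.orderIsoOfFin hq.symm).injective (Subtype.ext this)
      · intro i
        have he : ∑ u : Fin q, A i (ι' ((T.orderIsoOfFin hq.symm u) : Fin (r+1)))
            = ∑ j ∈ T, A' i j := by
          rw [← Finset.sum_attach T (fun j => A' i j), ← Finset.univ_eq_attach,
            ← Equiv.sum_comp (T.orderIsoOfFin hq.symm).toEquiv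
              (fun v => A' i (v : Fin (r+1)))]
          rfl
        rw [he]
        exact hno i
    obtain ⟨ε', hε'pm, hε'0⟩ := CC A' hA'tu hrow' hmin'
    -- complement columns
    set Tc : Finset (Fin s) := Finset.univ \ Finset.univ.image ι' with hTc
    set c := Tc.card with hc
    have himcard : (Finset.univ.image ι').card = r + 1 := by
      rw [Finset.card_image_of_injective _ hι'inj, Finset.card_univ, Fintype.card_fin]
    have hccard : c = s - (r+1) := by
      rw [hc, hTc, Finset.card_sdiff_of_subset (Finset.subset_univ _), himcard, Finset.card_univ,
        Fintype.card_fin]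
    have hclt : c < s := by omega
    set κc : Fin c → Fin s := fun v => ((Tc.orderIsoOfFin hc.symm v) : Fin s) with hκc
    have hκcinj : Function.Injective κc := by
      intro a b hab
      exact (Tc.orderIsoOfFin hc.symm).injective (Subtype.ext hab)
    set A'' : Matrix m (Fin c) ℤ := A.submatrix id κc with hA''
    have hA''tu : A''.IsTotallyUnimodular := hA.submatrix id κc
    have hsumTc : ∀ i, ∑ v : Fin c, A'' i v = ∑ j ∈ Tc, A i j := by
      intro i
      rw [← Finset.sum_attach Tc (fun j => A i j), ← Finset.univ_eq_attach,
        ← Equiv.sum_comp (Tc.orderIsoOfFin hc.symm).toEquiv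
          (fun v => A i (v : Fin s))]
      rfl
    have hrow'' : ∀ i, Even (∑ v, A'' i v) := by
      intro i
      rw [hsumTc i, hTc, Finset.sum_sdiff_eq_sub (Finset.subset_univ _)]
      have h1 : ∑ j ∈ Finset.univ.image ι', A i j = ∑ u : Fin (r+1), A i (ι' u) :=
        (Finset.sum_image (fun a _ b _ hab => hι'inj hab))
      rw [h1]
      rw [Int.even_sub]
      constructor
      · intro _; exact hrow' i
      · intro _; exact hrow i
    obtain ⟨ε'', hε''pm, hε''0⟩ := ih c hclt A'' hA''tu hrow''
    -- combine
    set e : Fin (r+1) ⊕ Fin c → Fin s := Sum.elim ι' κc with he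
    have heinj : Function.Injective e := by
      intro a b hab
      have hmem : ∀ u : Fin (r+1), ι' u ∈ Finset.univ.image ι' :=
        fun u => Finset.mem_image_of_mem _ (Finset.mem_univ u)
      have hmem2 : ∀ v : Fin c, κc v ∈ Tc := fun v => (Tc.orderIsoOfFin hc.symm v).2
      rcases a with a | a <;> rcases b with b | b
      · simp only [he, Sum.elim_inl] at hab
        exact congrArg Sum.inl (hι'inj hab)
      · exfalso
        simp only [he, Sum.elim_inl, Sum.elim_inr] at hab
        have h2 := hmem2 b
        rw [hTc, Finset.mem_sdiff] at h2
        apply h2.2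
        rw [← hab]
        exact hmem a
      · exfalso
        simp only [he, Sum.elim_inl, Sum.elim_inr] at hab
        have h2 := hmem2 a
        rw [hTc, Finset.mem_sdiff] at h2
        apply h2.2
        rw [hab]
        exact hmem b
      · simp only [he, Sum.elim_inr] at hab
        exact congrArg Sum.inr (hκcinj hab)
    have hebij : Function.Bijective e := by
      rw [Fintype.bijective_iff_injective_and_card]
      refine ⟨heinj, ?_⟩
      simp only [Fintype.card_sum, Fintype.card_fin]
      omega
    refine ⟨fun j => Sum.elim ε' ε'' ((Equiv.ofBijective e hebij).symm j), ?_, ?_⟩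
    · intro j
      show Sum.elim ε' ε'' ((Equiv.ofBijective e hebij).symm j) = 1 ∨
        Sum.elim ε' ε'' ((Equiv.ofBijective e hebij).symm j) = -1
      rcases h : (Equiv.ofBijective e hebij).symm j with u | v
      · exact hε'pm u
      · exact hε''pm v
    · intro i
      show ∑ j, A i j * Sum.elim ε' ε'' ((Equiv.ofBijective e hebij).symm j) = 0
      have hkey := Fintype.sum_bijective e hebij
        (fun y => A i (e y) * Sum.elim ε' ε'' y)
        (fun j => A i j * Sum.elim ε' ε'' ((Equiv.ofBijective e hebij).symm j))
        (fun y => by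
          show A i (e y) * (Sum.elim ε' ε'') y
            = A i (e y) * (Sum.elim ε' ε'') ((Equiv.ofBijective e hebij).symm (e y))
          rw [show e y = (Equiv.ofBijective e hebij) y from rfl, Equiv.symm_apply_apply])
      rw [← hkey, Fintype.sum_sum_type]
      have hl : ∑ u : Fin (r+1), A i (e (Sum.inl u)) * Sum.elim ε' ε'' (Sum.inl u)
          = ∑ u, A' i u * ε' u := Finset.sum_congr rfl fun u _ => rfl
      have hrr : ∑ v : Fin c, A i (e (Sum.inr v)) * Sum.elim ε' ε'' (Sum.inr v)
          = ∑ v, A'' i v * ε'' v := Finset.sum_congr rfl fun v _ => rfl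
      rw [hl, hrr, hε'0 i, hε''0 i, add_zero]

end CamionAux

/-- If a square integer matrix `M` contains a square submatrix
(selected by injective row/column maps `f`, `g`) in which every row sum and every
column sum is even but the total sum of its entries is not divisible by `4`,
then `M` is not totally unimodular (Camion's criterion, one direction). -/
theorem camion_necessary {n k : ℕ} (M : Matrix (Fin n) (Fin n) ℤ)
    (f g : Fin k → Fin n) (hf : Function.Injective f) (hg : Function.Injective g)
    (hrow : ∀ i : Fin k, Even (∑ j : Fin k, M (f i) (g j)))
    (hcol : ∀ j : Fin k, Even (∑ i : Fin k, M (f i) (g j)))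
    (hsum : ¬ (4 : ℤ) ∣ ∑ i : Fin k, ∑ j : Fin k, M (f i) (g j)) :
    ¬ M.IsTotallyUnimodular := by
  intro hM
  classical
  set A : Matrix (Fin k) (Fin k) ℤ := M.submatrix f g with hAdef
  have hA : A.IsTotallyUnimodular := hM.submatrix f g
  obtain ⟨ε, hεpm, hε0⟩ := CamionAux.KL k A hA (fun i => by simpa [hAdef] using hrow i)
  apply hsum
  have hswap : ∑ i : Fin k, ∑ j : Fin k, M (f i) (g j) = ∑ j : Fin k, ∑ i : Fin k, A i j := by
    rw [Finset.sum_comm]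
    rfl
  rw [hswap]
  have hcol' : ∀ j, Even (∑ i, A i j) := fun j => by simpa [hAdef] using hcol j
  have h1 : ∑ j : Fin k, (∑ i, A i j) * ε j = 0 := by
    calc ∑ j : Fin k, (∑ i, A i j) * ε j = ∑ j : Fin k, ∑ i, A i j * ε j := by
          refine Finset.sum_congr rfl fun j _ => ?_
          rw [Finset.sum_mul]
      _ = ∑ i : Fin k, ∑ j, A i j * ε j := Finset.sum_comm
      _ = 0 := by
          rw [Finset.sum_congr rfl (fun i _ => hε0 i)]
          simp
  have h2 : (4:ℤ) ∣ ∑ j : Fin k, (∑ i, A i j) * (1 - ε j) := by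
    refine Finset.dvd_sum fun j _ => ?_
    obtain ⟨cc, hcc⟩ := hcol' j
    rcases hεpm j with h | h
    · rw [h]; simp
    · rw [h, hcc]; exact ⟨cc, by ring⟩
  have hsplit : ∑ j : Fin k, ∑ i, A i j
      = ∑ j : Fin k, (∑ i, A i j) * (1 - ε j) + ∑ j : Fin k, (∑ i, A i j) * ε j := by
    rw [← Finset.sum_add_distrib]
    refine Finset.sum_congr rfl fun j _ => by ring
  rw [hsplit, h1, add_zero]
  exact h2
end

section
/- Let T1 and T2 be two triangles in ℝ³ sharing an edge e of length |e|, with dihedral angle θ between them (measured so that θ = π when the triangles are coplanar with consistent orientation), and let N_e be the unit vector in the direction of the half-sum of the two unit normals. Then the vector (1/2)(J1 e + J2 e) has norm |e| cos(θ/2) and direction N_e, i.e., (1/2)(J1 e + J2 e) = |e| cos(θ/2) N_e, assuming the two normals are not opposite. -/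
private lemma sq_eq_of_nonneg {x y : ℝ} (hx : 0 ≤ x) (hy : 0 ≤ y) (h : x^2 = y^2) : x = y := by
  have := Real.sqrt_sq hx
  rw [← this, h, Real.sqrt_sq hy]

/-- The cross product in `ℝ³` (as `EuclideanSpace ℝ (Fin 3)`). -/
noncomputable def cross3 (u v : EuclideanSpace ℝ (Fin 3)) : EuclideanSpace ℝ (Fin 3) :=
  (WithLp.equiv 2 (Fin 3 → ℝ)).symm
    ![u 1 * v 2 - u 2 * v 1, u 2 * v 0 - u 0 * v 2, u 0 * v 1 - u 1 * v 0]

section scalars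
variable (a0 a1 a2 b0 b1 b2 e0 e1 e2 : ℝ)

private lemma key1
    (h1 : a0*e0 + a1*e1 + a2*e2 = 0) (h2 : b0*e0 + b1*e1 + b2*e2 = 0) :
    ((a1*e2 - a2*e1) + (e1*b2 - e2*b1))^2 + ((a2*e0 - a0*e2) + (e2*b0 - e0*b2))^2
      + ((a0*e1 - a1*e0) + (e0*b1 - e1*b0))^2
    = ((a0-b0)^2 + (a1-b1)^2 + (a2-b2)^2) * (e0^2+e1^2+e2^2) := by
  linear_combination (-(a0*e0 + a1*e1 + a2*e2) + (b0*e0 + b1*e1 + b2*e2)) * (h1 - h2)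

private lemma key2
    (h1 : a0*e0 + a1*e1 + a2*e2 = 0) (h2 : b0*e0 + b1*e1 + b2*e2 = 0)
    (hn1 : a0^2+a1^2+a2^2 = 1) (hn2 : b0^2+b1^2+b2^2 = 1) :
    (((a1*e2 - a2*e1) + (e1*b2 - e2*b1)) * (a0+b0)
      + ((a2*e0 - a0*e2) + (e2*b0 - e0*b2)) * (a1+b1)
      + ((a0*e1 - a1*e0) + (e0*b1 - e1*b0)) * (a2+b2))^2
    = (((a1*e2 - a2*e1) + (e1*b2 - e2*b1))^2 + ((a2*e0 - a0*e2) + (e2*b0 - e0*b2))^2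
        + ((a0*e1 - a1*e0) + (e0*b1 - e1*b0))^2)
      * ((a0+b0)^2 + (a1+b1)^2 + (a2+b2)^2) := by
  have hc0 : (((a2*e0 - a0*e2) + (e2*b0 - e0*b2)) * (a2+b2)
      - ((a0*e1 - a1*e0) + (e0*b1 - e1*b0)) * (a1+b1)) = 0 := by
    linear_combination e0 * hn1 - e0 * hn2 - (a0-b0) * h1 - (a0-b0) * h2
  have hc1 : (((a0*e1 - a1*e0) + (e0*b1 - e1*b0)) * (a0+b0)
      - ((a1*e2 - a2*e1) + (e1*b2 - e2*b1)) * (a2+b2)) = 0 := by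
    linear_combination e1 * hn1 - e1 * hn2 - (a1-b1) * h1 - (a1-b1) * h2
  have hc2 : (((a1*e2 - a2*e1) + (e1*b2 - e2*b1)) * (a1+b1)
      - ((a2*e0 - a0*e2) + (e2*b0 - e0*b2)) * (a0+b0)) = 0 := by
    linear_combination e2 * hn1 - e2 * hn2 - (a2-b2) * h1 - (a2-b2) * h2
  linear_combination
    (-(((a2*e0 - a0*e2) + (e2*b0 - e0*b2)) * (a2+b2)
      - ((a0*e1 - a1*e0) + (e0*b1 - e1*b0)) * (a1+b1))) * hc0
    + (-(((a0*e1 - a1*e0) + (e0*b1 - e1*b0)) * (a0+b0)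
      - ((a1*e2 - a2*e1) + (e1*b2 - e2*b1)) * (a2+b2))) * hc1
    + (-(((a1*e2 - a2*e1) + (e1*b2 - e2*b1)) * (a1+b1)
      - ((a2*e0 - a0*e2) + (e2*b0 - e0*b2)) * (a0+b0))) * hc2

end scalars

/-- Let `e` be the shared oriented edge of two triangles with unit
normals `N1`, `N2` orthogonal to `e`, not opposite to each other, and let `θ` be the
dihedral angle (`θ = π` for a flat configuration, so `cos θ = -⟨N1,N2⟩`). Then the
area-gradient vector `(1/2)(J1 e + J2 e)` (with `J1 v = N1 × v`, `J2 v = v × N2`,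
the sign convention fixed by `hsign`) equals `|e| cos(θ/2) N_e`, where
`N_e = (N1 + N2)/‖N1 + N2‖` is the angle-bisecting unit normal. -/
theorem area_gradient_eq_discrete_mean_curvature
    (e N1 N2 : EuclideanSpace ℝ (Fin 3)) (θ : ℝ)
    (he : e ≠ 0) (hN1 : ‖N1‖ = 1) (hN2 : ‖N2‖ = 1)
    (h1 : (inner ℝ N1 e : ℝ) = 0) (h2 : (inner ℝ N2 e : ℝ) = 0)
    (hopp : N1 + N2 ≠ 0)
    (hθ : θ ∈ Set.Icc (0 : ℝ) Real.pi)
    (hcos : Real.cos θ = -(inner ℝ N1 N2 : ℝ))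
    (hsign : 0 ≤ (inner ℝ (cross3 N1 e + cross3 e N2) (N1 + N2) : ℝ)) :
    (1 / 2 : ℝ) • (cross3 N1 e + cross3 e N2)
      = (‖e‖ * Real.cos (θ / 2)) • (‖N1 + N2‖⁻¹ • (N1 + N2)) := by
  set w : EuclideanSpace ℝ (Fin 3) := cross3 N1 e + cross3 e N2 with hwdef
  set u : EuclideanSpace ℝ (Fin 3) := N1 + N2 with hudef
  have hinner : ∀ x y : EuclideanSpace ℝ (Fin 3),
      (inner ℝ x y : ℝ) = x 0 * y 0 + x 1 * y 1 + x 2 * y 2 := by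
    intro x y
    simp [PiLp.inner_apply, Fin.sum_univ_three, RCLike.inner_apply, mul_comm]
  -- component-level hypotheses
  have h1' : N1 0 * e 0 + N1 1 * e 1 + N1 2 * e 2 = 0 := by rw [← hinner]; exact h1
  have h2' : N2 0 * e 0 + N2 1 * e 1 + N2 2 * e 2 = 0 := by rw [← hinner]; exact h2
  have hn1' : (N1 0)^2 + (N1 1)^2 + (N1 2)^2 = 1 := by
    have := real_inner_self_eq_norm_sq N1
    rw [hinner, hN1] at this; linear_combination this
  have hn2' : (N2 0)^2 + (N2 1)^2 + (N2 2)^2 = 1 := by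
    have := real_inner_self_eq_norm_sq N2
    rw [hinner, hN2] at this; linear_combination this
  -- components of w and u
  have hw0 : w 0 = (N1 1 * e 2 - N1 2 * e 1) + (e 1 * N2 2 - e 2 * N2 1) := rfl
  have hw1 : w 1 = (N1 2 * e 0 - N1 0 * e 2) + (e 2 * N2 0 - e 0 * N2 2) := rfl
  have hw2c : w 2 = (N1 0 * e 1 - N1 1 * e 0) + (e 0 * N2 1 - e 1 * N2 0) := rfl
  have hu0c : ∀ i : Fin 3, u i = N1 i + N2 i := fun _ => rfl
  -- norms and inner products as scalars
  have hee : e 0 ^ 2 + e 1 ^ 2 + e 2 ^ 2 = ‖e‖ ^ 2 := by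
    have := real_inner_self_eq_norm_sq e
    rw [hinner] at this; linear_combination this
  have huu : (inner ℝ u u : ℝ) = ‖u‖ ^ 2 := real_inner_self_eq_norm_sq u
  have hab : N1 0 * N2 0 + N1 1 * N2 1 + N1 2 * N2 2 = -Real.cos θ := by
    rw [← hinner]; linarith [hcos]
  -- half-angle
  have hchalf : Real.cos θ = 2 * Real.cos (θ/2) ^ 2 - 1 := by
    have h := Real.cos_sq (θ/2)
    rw [show (2:ℝ) * (θ/2) = θ by ring] at h
    linarith
  have hcos_nonneg : 0 ≤ Real.cos (θ/2) := by
    apply Real.cos_nonneg_of_mem_Icc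
    constructor
    · linarith [hθ.1, Real.pi_pos]
    · linarith [hθ.2, Real.pi_pos]
  -- ⟪w,w⟫ = 4 cos²(θ/2) ‖e‖²
  have Hww : (inner ℝ w w : ℝ) = 4 * Real.cos (θ/2) ^ 2 * ‖e‖ ^ 2 := by
    rw [hinner, hw0, hw1, hw2c]
    have k1 := key1 (N1 0) (N1 1) (N1 2) (N2 0) (N2 1) (N2 2) (e 0) (e 1) (e 2) h1' h2'
    linear_combination k1 + (e 0^2 + e 1^2 + e 2^2) * hn1' + (e 0^2 + e 1^2 + e 2^2) * hn2'
      - 2 * (e 0^2 + e 1^2 + e 2^2) * hab + 2 * (e 0^2 + e 1^2 + e 2^2) * hchalf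
      + 4 * Real.cos (θ/2)^2 * hee
  -- ⟪w,u⟫² = ⟪w,w⟫ ⟪u,u⟫
  have Hwu_sq : (inner ℝ w u : ℝ) ^ 2 = (inner ℝ w w : ℝ) * (inner ℝ u u : ℝ) := by
    rw [hinner, hinner, hinner, hw0, hw1, hw2c, hu0c 0, hu0c 1, hu0c 2]
    have k2 := key2 (N1 0) (N1 1) (N1 2) (N2 0) (N2 1) (N2 2) (e 0) (e 1) (e 2)
      h1' h2' hn1' hn2'
    linear_combination k2
  have hu_norm_pos : (0:ℝ) < ‖u‖ := by
    rw [norm_pos_iff]; exact hopp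
  have Hwu : (inner ℝ w u : ℝ) = 2 * Real.cos (θ/2) * ‖e‖ * ‖u‖ := by
    apply sq_eq_of_nonneg hsign
    · positivity
    · rw [Hwu_sq, Hww, huu]; ring
  -- conclude by showing the difference has zero inner-square
  have key : (1 / 2 : ℝ) • w - (‖e‖ * Real.cos (θ / 2) * ‖u‖⁻¹) • u = 0 := by
    rw [← inner_self_eq_zero (𝕜 := ℝ)]
    simp only [inner_sub_left, inner_sub_right, real_inner_smul_left, real_inner_smul_right]
    have Hwu' : (inner ℝ u w : ℝ) = 2 * Real.cos (θ/2) * ‖e‖ * ‖u‖ := by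
      rw [real_inner_comm]; exact Hwu
    rw [Hww, Hwu, Hwu', huu]
    have hne : ‖u‖ ≠ 0 := ne_of_gt hu_norm_pos
    have hinv : ‖u‖ * ‖u‖⁻¹ = 1 := mul_inv_cancel₀ hne
    linear_combination (Real.cos (θ/2)^2 * ‖e‖^2 * (‖u‖ * ‖u‖⁻¹ - 1)) * hinv
  have := sub_eq_zero.mp key
  rw [this, smul_smul]
end

section
/- There exists a {-1,0,1}-matrix with exactly two -1 entries per column for some columns and exactly three +1 entries per column for other columns that is not totally unimodular. -/
/-- There exists a `{-1,0,1}`-matrix, each of whose columns is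
either zero except for exactly two `-1` entries or zero except for exactly three
`+1` entries (with both kinds of columns occurring), that is not totally
unimodular. -/
theorem exists_triangle_incidence_not_totallyUnimodular :
    ∃ (m n : ℕ) (D : Matrix (Fin m) (Fin n) ℤ),
      (∀ j : Fin n,
        (∃ s : Finset (Fin m), s.card = 3 ∧ ∀ i, D i j = if i ∈ s then 1 else 0) ∨
        (∃ s : Finset (Fin m), s.card = 2 ∧ ∀ i, D i j = if i ∈ s then -1 else 0)) ∧
      (∃ j : Fin n, ∃ s : Finset (Fin m), s.card = 3 ∧
        ∀ i, D i j = if i ∈ s then 1 else 0) ∧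
      (∃ j : Fin n, ∃ s : Finset (Fin m), s.card = 2 ∧
        ∀ i, D i j = if i ∈ s then -1 else 0) ∧
      ¬ D.IsTotallyUnimodular := by
  refine ⟨3, 4, !![1,-1,0,-1; 1,-1,-1,0; 1,0,-1,-1], ?_, ?_, ?_, ?_⟩
  · intro j
    fin_cases j
    · exact Or.inl ⟨{0,1,2}, by decide, by decide⟩
    · exact Or.inr ⟨{0,1}, by decide, by decide⟩
    · exact Or.inr ⟨{1,2}, by decide, by decide⟩
    · exact Or.inr ⟨{0,2}, by decide, by decide⟩
  · exact ⟨0, {0,1,2}, by decide, by decide⟩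
  · exact ⟨1, {0,1}, by decide, by decide⟩
  · intro h
    have := h 3 id Fin.succ Function.injective_id (Fin.succ_injective 3)
    obtain ⟨s, hs⟩ := this
    have hd : ((!![1,-1,0,-1; 1,-1,-1,0; 1,0,-1,-1] : Matrix (Fin 3) (Fin 4) ℤ).submatrix id Fin.succ).det = -2 := by
      decide
    rw [hd] at hs
    cases s <;> simp_all
end

section
/- In the matrix of Table 1 (a 27×27 {-1,0,1}-matrix with specified entries, padded with zero rows to be square), every row sum and every column sum is even, and the total sum of all entries is -42, which is not divisible by 4; hence by Camion's criterion any matrix containing it as a submatrix is not totally unimodular. -/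
set_option maxHeartbeats 4000000
set_option maxRecDepth 200000


/-- The `27 × 27` matrix of Table 1: rows `0`–`19` are the pairs
`(T₁,e₁),…,(T₈,e₁),(T₁,e₂),(T₉,e₂),…,(T₁₃,e₂),(T₉,e₃),(T₅,e₃),…,(T₁₇,e₃)`,
rows `20`–`26` are zero padding; columns `0,1,2` are the triangles `T₁,T₅,T₉`
(entries `+1`) and columns `3`–`26` are the quadrangles (entries `-1`). -/
def tableMatrix : Matrix (Fin 27) (Fin 27) ℤ :=
  Matrix.of fun i j =>
    if (i.val, j.val) ∈ [(0, 0), (8, 0), (4, 1), (15, 1), (9, 2), (14, 2)] then 1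
    else if (i.val, j.val) ∈
        [(0, 3), (1, 3), (1, 4), (2, 4), (2, 5), (3, 5), (3, 6), (4, 6),
         (1, 7), (4, 7), (4, 8), (5, 8), (0, 9), (5, 9), (0, 10), (6, 10),
         (6, 11), (7, 11), (1, 12), (7, 12), (8, 13), (9, 13), (9, 14), (10, 14),
         (10, 15), (11, 15), (8, 16), (11, 16), (8, 17), (12, 17), (12, 18), (13, 18),
         (9, 19), (13, 19), (14, 20), (15, 20), (15, 21), (16, 21), (16, 22), (17, 22),
         (14, 23), (17, 23), (14, 24), (18, 24), (18, 25), (19, 25), (15, 26), (19, 26)]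
      then -1
    else 0

/-- row indices of the violating 7×7 submatrix (an odd cycle). -/
def badRows : Fin 7 → Fin 27 := ![0, 1, 4, 8, 9, 14, 15]

/-- column indices of the violating 7×7 submatrix. -/
def badCols : Fin 7 → Fin 27 := ![0, 1, 2, 3, 7, 13, 20]

lemma badRows_inj : Function.Injective badRows := by decide

lemma badCols_inj : Function.Injective badCols := by decide

lemma d3 : (!![0,0,-1,0;1,0,-1,0;1,0,0,-1;0,0,0,-1] : Matrix (Fin 4) (Fin 4) ℤ).det = 0 := by decide

lemma d4 : (!![0,0,-1,0;0,1,-1,0;0,1,0,-1;1,0,0,-1] : Matrix (Fin 4) (Fin 4) ℤ).det = 1 := by decide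

lemma d2 : (!![1,0,-1,0,0;0,0,0,-1,0;0,1,0,-1,0;0,1,0,0,-1;1,0,0,0,-1] : Matrix (Fin 5) (Fin 5) ℤ).det = -1 := by
  have z0 : (!![1,0,-1,0,0;0,0,0,-1,0;0,1,0,-1,0;0,1,0,0,-1;1,0,0,0,-1] : Matrix (Fin 5) (Fin 5) ℤ) 0 0 = 1 := by decide
  have z1 : (!![1,0,-1,0,0;0,0,0,-1,0;0,1,0,-1,0;0,1,0,0,-1;1,0,0,0,-1] : Matrix (Fin 5) (Fin 5) ℤ) 0 1 = 0 := by decide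
  have z2 : (!![1,0,-1,0,0;0,0,0,-1,0;0,1,0,-1,0;0,1,0,0,-1;1,0,0,0,-1] : Matrix (Fin 5) (Fin 5) ℤ) 0 2 = -1 := by decide
  have z3 : (!![1,0,-1,0,0;0,0,0,-1,0;0,1,0,-1,0;0,1,0,0,-1;1,0,0,0,-1] : Matrix (Fin 5) (Fin 5) ℤ) 0 3 = 0 := by decide
  have z4 : (!![1,0,-1,0,0;0,0,0,-1,0;0,1,0,-1,0;0,1,0,0,-1;1,0,0,0,-1] : Matrix (Fin 5) (Fin 5) ℤ) 0 4 = 0 := by decide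
  have e0 : ((!![1,0,-1,0,0;0,0,0,-1,0;0,1,0,-1,0;0,1,0,0,-1;1,0,0,0,-1] : Matrix (Fin 5) (Fin 5) ℤ).submatrix Fin.succ (Fin.succAbove (0 : Fin 5))).det = 0 := by
    rw [show (!![1,0,-1,0,0;0,0,0,-1,0;0,1,0,-1,0;0,1,0,0,-1;1,0,0,0,-1] : Matrix (Fin 5) (Fin 5) ℤ).submatrix Fin.succ (Fin.succAbove (0 : Fin 5)) = (!![0,0,-1,0;1,0,-1,0;1,0,0,-1;0,0,0,-1] : Matrix (Fin 4) (Fin 4) ℤ) from by decide]; exact d3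
  have e2 : ((!![1,0,-1,0,0;0,0,0,-1,0;0,1,0,-1,0;0,1,0,0,-1;1,0,0,0,-1] : Matrix (Fin 5) (Fin 5) ℤ).submatrix Fin.succ (Fin.succAbove (2 : Fin 5))).det = 1 := by
    rw [show (!![1,0,-1,0,0;0,0,0,-1,0;0,1,0,-1,0;0,1,0,0,-1;1,0,0,0,-1] : Matrix (Fin 5) (Fin 5) ℤ).submatrix Fin.succ (Fin.succAbove (2 : Fin 5)) = (!![0,0,-1,0;0,1,-1,0;0,1,0,-1;1,0,0,-1] : Matrix (Fin 4) (Fin 4) ℤ) from by decide]; exact d4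
  have p0 : ((0 : Fin 5) : ℕ) = 0 := rfl
  have p1 : ((1 : Fin 5) : ℕ) = 1 := rfl
  have p2 : ((2 : Fin 5) : ℕ) = 2 := rfl
  have p3 : ((3 : Fin 5) : ℕ) = 3 := rfl
  have p4 : ((4 : Fin 5) : ℕ) = 4 := rfl
  rw [Matrix.det_succ_row_zero, Fin.sum_univ_five, e0, e2, z0, z1, z2, z3, z4, p0, p1, p2, p3, p4]
  norm_num

lemma d6 : (!![0,0,-1,0;1,0,-1,0;1,0,0,-1;0,0,0,-1] : Matrix (Fin 4) (Fin 4) ℤ).det = 0 := by decide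

lemma d5 : (!![1,0,0,0,0;0,0,0,-1,0;0,1,0,-1,0;0,1,0,0,-1;1,0,0,0,-1] : Matrix (Fin 5) (Fin 5) ℤ).det = 0 := by
  have z0 : (!![1,0,0,0,0;0,0,0,-1,0;0,1,0,-1,0;0,1,0,0,-1;1,0,0,0,-1] : Matrix (Fin 5) (Fin 5) ℤ) 0 0 = 1 := by decide
  have z1 : (!![1,0,0,0,0;0,0,0,-1,0;0,1,0,-1,0;0,1,0,0,-1;1,0,0,0,-1] : Matrix (Fin 5) (Fin 5) ℤ) 0 1 = 0 := by decide
  have z2 : (!![1,0,0,0,0;0,0,0,-1,0;0,1,0,-1,0;0,1,0,0,-1;1,0,0,0,-1] : Matrix (Fin 5) (Fin 5) ℤ) 0 2 = 0 := by decide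
  have z3 : (!![1,0,0,0,0;0,0,0,-1,0;0,1,0,-1,0;0,1,0,0,-1;1,0,0,0,-1] : Matrix (Fin 5) (Fin 5) ℤ) 0 3 = 0 := by decide
  have z4 : (!![1,0,0,0,0;0,0,0,-1,0;0,1,0,-1,0;0,1,0,0,-1;1,0,0,0,-1] : Matrix (Fin 5) (Fin 5) ℤ) 0 4 = 0 := by decide
  have e0 : ((!![1,0,0,0,0;0,0,0,-1,0;0,1,0,-1,0;0,1,0,0,-1;1,0,0,0,-1] : Matrix (Fin 5) (Fin 5) ℤ).submatrix Fin.succ (Fin.succAbove (0 : Fin 5))).det = 0 := by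
    rw [show (!![1,0,0,0,0;0,0,0,-1,0;0,1,0,-1,0;0,1,0,0,-1;1,0,0,0,-1] : Matrix (Fin 5) (Fin 5) ℤ).submatrix Fin.succ (Fin.succAbove (0 : Fin 5)) = (!![0,0,-1,0;1,0,-1,0;1,0,0,-1;0,0,0,-1] : Matrix (Fin 4) (Fin 4) ℤ) from by decide]; exact d6
  have p0 : ((0 : Fin 5) : ℕ) = 0 := rfl
  have p1 : ((1 : Fin 5) : ℕ) = 1 := rfl
  have p2 : ((2 : Fin 5) : ℕ) = 2 := rfl
  have p3 : ((3 : Fin 5) : ℕ) = 3 := rfl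
  have p4 : ((4 : Fin 5) : ℕ) = 4 := rfl
  rw [Matrix.det_succ_row_zero, Fin.sum_univ_five, e0, z0, z1, z2, z3, z4, p0, p1, p2, p3, p4]
  norm_num

lemma d1 : (!![0,0,-1,-1,0,0;1,0,0,-1,0,0;0,0,0,0,-1,0;0,1,0,0,-1,0;0,1,0,0,0,-1;1,0,0,0,0,-1] : Matrix (Fin 6) (Fin 6) ℤ).det = 1 := by
  have z0 : (!![0,0,-1,-1,0,0;1,0,0,-1,0,0;0,0,0,0,-1,0;0,1,0,0,-1,0;0,1,0,0,0,-1;1,0,0,0,0,-1] : Matrix (Fin 6) (Fin 6) ℤ) 0 0 = 0 := by decide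
  have z1 : (!![0,0,-1,-1,0,0;1,0,0,-1,0,0;0,0,0,0,-1,0;0,1,0,0,-1,0;0,1,0,0,0,-1;1,0,0,0,0,-1] : Matrix (Fin 6) (Fin 6) ℤ) 0 1 = 0 := by decide
  have z2 : (!![0,0,-1,-1,0,0;1,0,0,-1,0,0;0,0,0,0,-1,0;0,1,0,0,-1,0;0,1,0,0,0,-1;1,0,0,0,0,-1] : Matrix (Fin 6) (Fin 6) ℤ) 0 2 = -1 := by decide
  have z3 : (!![0,0,-1,-1,0,0;1,0,0,-1,0,0;0,0,0,0,-1,0;0,1,0,0,-1,0;0,1,0,0,0,-1;1,0,0,0,0,-1] : Matrix (Fin 6) (Fin 6) ℤ) 0 3 = -1 := by decide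
  have z4 : (!![0,0,-1,-1,0,0;1,0,0,-1,0,0;0,0,0,0,-1,0;0,1,0,0,-1,0;0,1,0,0,0,-1;1,0,0,0,0,-1] : Matrix (Fin 6) (Fin 6) ℤ) 0 4 = 0 := by decide
  have z5 : (!![0,0,-1,-1,0,0;1,0,0,-1,0,0;0,0,0,0,-1,0;0,1,0,0,-1,0;0,1,0,0,0,-1;1,0,0,0,0,-1] : Matrix (Fin 6) (Fin 6) ℤ) 0 5 = 0 := by decide
  have e2 : ((!![0,0,-1,-1,0,0;1,0,0,-1,0,0;0,0,0,0,-1,0;0,1,0,0,-1,0;0,1,0,0,0,-1;1,0,0,0,0,-1] : Matrix (Fin 6) (Fin 6) ℤ).submatrix Fin.succ (Fin.succAbove (2 : Fin 6))).det = -1 := by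
    rw [show (!![0,0,-1,-1,0,0;1,0,0,-1,0,0;0,0,0,0,-1,0;0,1,0,0,-1,0;0,1,0,0,0,-1;1,0,0,0,0,-1] : Matrix (Fin 6) (Fin 6) ℤ).submatrix Fin.succ (Fin.succAbove (2 : Fin 6)) = (!![1,0,-1,0,0;0,0,0,-1,0;0,1,0,-1,0;0,1,0,0,-1;1,0,0,0,-1] : Matrix (Fin 5) (Fin 5) ℤ) from by decide]; exact d2
  have e3 : ((!![0,0,-1,-1,0,0;1,0,0,-1,0,0;0,0,0,0,-1,0;0,1,0,0,-1,0;0,1,0,0,0,-1;1,0,0,0,0,-1] : Matrix (Fin 6) (Fin 6) ℤ).submatrix Fin.succ (Fin.succAbove (3 : Fin 6))).det = 0 := by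
    rw [show (!![0,0,-1,-1,0,0;1,0,0,-1,0,0;0,0,0,0,-1,0;0,1,0,0,-1,0;0,1,0,0,0,-1;1,0,0,0,0,-1] : Matrix (Fin 6) (Fin 6) ℤ).submatrix Fin.succ (Fin.succAbove (3 : Fin 6)) = (!![1,0,0,0,0;0,0,0,-1,0;0,1,0,-1,0;0,1,0,0,-1;1,0,0,0,-1] : Matrix (Fin 5) (Fin 5) ℤ) from by decide]; exact d5
  have p0 : ((0 : Fin 6) : ℕ) = 0 := rfl
  have p1 : ((1 : Fin 6) : ℕ) = 1 := rfl
  have p2 : ((2 : Fin 6) : ℕ) = 2 := rfl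
  have p3 : ((3 : Fin 6) : ℕ) = 3 := rfl
  have p4 : ((4 : Fin 6) : ℕ) = 4 := rfl
  have p5 : ((5 : Fin 6) : ℕ) = 5 := rfl
  rw [Matrix.det_succ_row_zero, Fin.sum_univ_six, e2, e3, z0, z1, z2, z3, z4, z5, p0, p1, p2, p3, p4, p5]
  norm_num

lemma d9 : (!![1,0,-1,0;0,1,-1,0;0,1,0,-1;0,0,0,-1] : Matrix (Fin 4) (Fin 4) ℤ).det = -1 := by decide

lemma d8 : (!![0,1,0,0,0;1,0,0,-1,0;0,0,1,-1,0;0,0,1,0,-1;0,1,0,0,-1] : Matrix (Fin 5) (Fin 5) ℤ).det = 1 := by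
  have z0 : (!![0,1,0,0,0;1,0,0,-1,0;0,0,1,-1,0;0,0,1,0,-1;0,1,0,0,-1] : Matrix (Fin 5) (Fin 5) ℤ) 0 0 = 0 := by decide
  have z1 : (!![0,1,0,0,0;1,0,0,-1,0;0,0,1,-1,0;0,0,1,0,-1;0,1,0,0,-1] : Matrix (Fin 5) (Fin 5) ℤ) 0 1 = 1 := by decide
  have z2 : (!![0,1,0,0,0;1,0,0,-1,0;0,0,1,-1,0;0,0,1,0,-1;0,1,0,0,-1] : Matrix (Fin 5) (Fin 5) ℤ) 0 2 = 0 := by decide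
  have z3 : (!![0,1,0,0,0;1,0,0,-1,0;0,0,1,-1,0;0,0,1,0,-1;0,1,0,0,-1] : Matrix (Fin 5) (Fin 5) ℤ) 0 3 = 0 := by decide
  have z4 : (!![0,1,0,0,0;1,0,0,-1,0;0,0,1,-1,0;0,0,1,0,-1;0,1,0,0,-1] : Matrix (Fin 5) (Fin 5) ℤ) 0 4 = 0 := by decide
  have e1 : ((!![0,1,0,0,0;1,0,0,-1,0;0,0,1,-1,0;0,0,1,0,-1;0,1,0,0,-1] : Matrix (Fin 5) (Fin 5) ℤ).submatrix Fin.succ (Fin.succAbove (1 : Fin 5))).det = -1 := by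
    rw [show (!![0,1,0,0,0;1,0,0,-1,0;0,0,1,-1,0;0,0,1,0,-1;0,1,0,0,-1] : Matrix (Fin 5) (Fin 5) ℤ).submatrix Fin.succ (Fin.succAbove (1 : Fin 5)) = (!![1,0,-1,0;0,1,-1,0;0,1,0,-1;0,0,0,-1] : Matrix (Fin 4) (Fin 4) ℤ) from by decide]; exact d9
  have p0 : ((0 : Fin 5) : ℕ) = 0 := rfl
  have p1 : ((1 : Fin 5) : ℕ) = 1 := rfl
  have p2 : ((2 : Fin 5) : ℕ) = 2 := rfl
  have p3 : ((3 : Fin 5) : ℕ) = 3 := rfl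
  have p4 : ((4 : Fin 5) : ℕ) = 4 := rfl
  rw [Matrix.det_succ_row_zero, Fin.sum_univ_five, e1, z0, z1, z2, z3, z4, p0, p1, p2, p3, p4]
  norm_num

lemma d7 : (!![0,0,0,-1,0,0;0,1,0,-1,0,0;1,0,0,0,-1,0;0,0,1,0,-1,0;0,0,1,0,0,-1;0,1,0,0,0,-1] : Matrix (Fin 6) (Fin 6) ℤ).det = 1 := by
  have z0 : (!![0,0,0,-1,0,0;0,1,0,-1,0,0;1,0,0,0,-1,0;0,0,1,0,-1,0;0,0,1,0,0,-1;0,1,0,0,0,-1] : Matrix (Fin 6) (Fin 6) ℤ) 0 0 = 0 := by decide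
  have z1 : (!![0,0,0,-1,0,0;0,1,0,-1,0,0;1,0,0,0,-1,0;0,0,1,0,-1,0;0,0,1,0,0,-1;0,1,0,0,0,-1] : Matrix (Fin 6) (Fin 6) ℤ) 0 1 = 0 := by decide
  have z2 : (!![0,0,0,-1,0,0;0,1,0,-1,0,0;1,0,0,0,-1,0;0,0,1,0,-1,0;0,0,1,0,0,-1;0,1,0,0,0,-1] : Matrix (Fin 6) (Fin 6) ℤ) 0 2 = 0 := by decide
  have z3 : (!![0,0,0,-1,0,0;0,1,0,-1,0,0;1,0,0,0,-1,0;0,0,1,0,-1,0;0,0,1,0,0,-1;0,1,0,0,0,-1] : Matrix (Fin 6) (Fin 6) ℤ) 0 3 = -1 := by decide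
  have z4 : (!![0,0,0,-1,0,0;0,1,0,-1,0,0;1,0,0,0,-1,0;0,0,1,0,-1,0;0,0,1,0,0,-1;0,1,0,0,0,-1] : Matrix (Fin 6) (Fin 6) ℤ) 0 4 = 0 := by decide
  have z5 : (!![0,0,0,-1,0,0;0,1,0,-1,0,0;1,0,0,0,-1,0;0,0,1,0,-1,0;0,0,1,0,0,-1;0,1,0,0,0,-1] : Matrix (Fin 6) (Fin 6) ℤ) 0 5 = 0 := by decide
  have e3 : ((!![0,0,0,-1,0,0;0,1,0,-1,0,0;1,0,0,0,-1,0;0,0,1,0,-1,0;0,0,1,0,0,-1;0,1,0,0,0,-1] : Matrix (Fin 6) (Fin 6) ℤ).submatrix Fin.succ (Fin.succAbove (3 : Fin 6))).det = 1 := by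
    rw [show (!![0,0,0,-1,0,0;0,1,0,-1,0,0;1,0,0,0,-1,0;0,0,1,0,-1,0;0,0,1,0,0,-1;0,1,0,0,0,-1] : Matrix (Fin 6) (Fin 6) ℤ).submatrix Fin.succ (Fin.succAbove (3 : Fin 6)) = (!![0,1,0,0,0;1,0,0,-1,0;0,0,1,-1,0;0,0,1,0,-1;0,1,0,0,-1] : Matrix (Fin 5) (Fin 5) ℤ) from by decide]; exact d8
  have p0 : ((0 : Fin 6) : ℕ) = 0 := rfl
  have p1 : ((1 : Fin 6) : ℕ) = 1 := rfl
  have p2 : ((2 : Fin 6) : ℕ) = 2 := rfl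
  have p3 : ((3 : Fin 6) : ℕ) = 3 := rfl
  have p4 : ((4 : Fin 6) : ℕ) = 4 := rfl
  have p5 : ((5 : Fin 6) : ℕ) = 5 := rfl
  rw [Matrix.det_succ_row_zero, Fin.sum_univ_six, e3, z0, z1, z2, z3, z4, z5, p0, p1, p2, p3, p4, p5]
  norm_num

lemma d0 : (!![1,0,0,-1,0,0,0;0,0,0,-1,-1,0,0;0,1,0,0,-1,0,0;1,0,0,0,0,-1,0;0,0,1,0,0,-1,0;0,0,1,0,0,0,-1;0,1,0,0,0,0,-1] : Matrix (Fin 7) (Fin 7) ℤ).det = 2 := by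
  have z0 : (!![1,0,0,-1,0,0,0;0,0,0,-1,-1,0,0;0,1,0,0,-1,0,0;1,0,0,0,0,-1,0;0,0,1,0,0,-1,0;0,0,1,0,0,0,-1;0,1,0,0,0,0,-1] : Matrix (Fin 7) (Fin 7) ℤ) 0 0 = 1 := by decide
  have z1 : (!![1,0,0,-1,0,0,0;0,0,0,-1,-1,0,0;0,1,0,0,-1,0,0;1,0,0,0,0,-1,0;0,0,1,0,0,-1,0;0,0,1,0,0,0,-1;0,1,0,0,0,0,-1] : Matrix (Fin 7) (Fin 7) ℤ) 0 1 = 0 := by decide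
  have z2 : (!![1,0,0,-1,0,0,0;0,0,0,-1,-1,0,0;0,1,0,0,-1,0,0;1,0,0,0,0,-1,0;0,0,1,0,0,-1,0;0,0,1,0,0,0,-1;0,1,0,0,0,0,-1] : Matrix (Fin 7) (Fin 7) ℤ) 0 2 = 0 := by decide
  have z3 : (!![1,0,0,-1,0,0,0;0,0,0,-1,-1,0,0;0,1,0,0,-1,0,0;1,0,0,0,0,-1,0;0,0,1,0,0,-1,0;0,0,1,0,0,0,-1;0,1,0,0,0,0,-1] : Matrix (Fin 7) (Fin 7) ℤ) 0 3 = -1 := by decide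
  have z4 : (!![1,0,0,-1,0,0,0;0,0,0,-1,-1,0,0;0,1,0,0,-1,0,0;1,0,0,0,0,-1,0;0,0,1,0,0,-1,0;0,0,1,0,0,0,-1;0,1,0,0,0,0,-1] : Matrix (Fin 7) (Fin 7) ℤ) 0 4 = 0 := by decide
  have z5 : (!![1,0,0,-1,0,0,0;0,0,0,-1,-1,0,0;0,1,0,0,-1,0,0;1,0,0,0,0,-1,0;0,0,1,0,0,-1,0;0,0,1,0,0,0,-1;0,1,0,0,0,0,-1] : Matrix (Fin 7) (Fin 7) ℤ) 0 5 = 0 := by decide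
  have z6 : (!![1,0,0,-1,0,0,0;0,0,0,-1,-1,0,0;0,1,0,0,-1,0,0;1,0,0,0,0,-1,0;0,0,1,0,0,-1,0;0,0,1,0,0,0,-1;0,1,0,0,0,0,-1] : Matrix (Fin 7) (Fin 7) ℤ) 0 6 = 0 := by decide
  have e0 : ((!![1,0,0,-1,0,0,0;0,0,0,-1,-1,0,0;0,1,0,0,-1,0,0;1,0,0,0,0,-1,0;0,0,1,0,0,-1,0;0,0,1,0,0,0,-1;0,1,0,0,0,0,-1] : Matrix (Fin 7) (Fin 7) ℤ).submatrix Fin.succ (Fin.succAbove (0 : Fin 7))).det = 1 := by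
    rw [show (!![1,0,0,-1,0,0,0;0,0,0,-1,-1,0,0;0,1,0,0,-1,0,0;1,0,0,0,0,-1,0;0,0,1,0,0,-1,0;0,0,1,0,0,0,-1;0,1,0,0,0,0,-1] : Matrix (Fin 7) (Fin 7) ℤ).submatrix Fin.succ (Fin.succAbove (0 : Fin 7)) = (!![0,0,-1,-1,0,0;1,0,0,-1,0,0;0,0,0,0,-1,0;0,1,0,0,-1,0;0,1,0,0,0,-1;1,0,0,0,0,-1] : Matrix (Fin 6) (Fin 6) ℤ) from by decide]; exact d1
  have e3 : ((!![1,0,0,-1,0,0,0;0,0,0,-1,-1,0,0;0,1,0,0,-1,0,0;1,0,0,0,0,-1,0;0,0,1,0,0,-1,0;0,0,1,0,0,0,-1;0,1,0,0,0,0,-1] : Matrix (Fin 7) (Fin 7) ℤ).submatrix Fin.succ (Fin.succAbove (3 : Fin 7))).det = 1 := by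
    rw [show (!![1,0,0,-1,0,0,0;0,0,0,-1,-1,0,0;0,1,0,0,-1,0,0;1,0,0,0,0,-1,0;0,0,1,0,0,-1,0;0,0,1,0,0,0,-1;0,1,0,0,0,0,-1] : Matrix (Fin 7) (Fin 7) ℤ).submatrix Fin.succ (Fin.succAbove (3 : Fin 7)) = (!![0,0,0,-1,0,0;0,1,0,-1,0,0;1,0,0,0,-1,0;0,0,1,0,-1,0;0,0,1,0,0,-1;0,1,0,0,0,-1] : Matrix (Fin 6) (Fin 6) ℤ) from by decide]; exact d7
  have p0 : ((0 : Fin 7) : ℕ) = 0 := rfl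
  have p1 : ((1 : Fin 7) : ℕ) = 1 := rfl
  have p2 : ((2 : Fin 7) : ℕ) = 2 := rfl
  have p3 : ((3 : Fin 7) : ℕ) = 3 := rfl
  have p4 : ((4 : Fin 7) : ℕ) = 4 := rfl
  have p5 : ((5 : Fin 7) : ℕ) = 5 := rfl
  have p6 : ((6 : Fin 7) : ℕ) = 6 := rfl
  rw [Matrix.det_succ_row_zero, Fin.sum_univ_seven, e0, e3, z0, z1, z2, z3, z4, z5, z6, p0, p1, p2, p3, p4, p5, p6]
  norm_num


lemma bad_det : (tableMatrix.submatrix badRows badCols).det = 2 := by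
  have h : tableMatrix.submatrix badRows badCols =
      !![1, 0, 0, -1, 0, 0, 0;
         0, 0, 0, -1, -1, 0, 0;
         0, 1, 0, 0, -1, 0, 0;
         1, 0, 0, 0, 0, -1, 0;
         0, 0, 1, 0, 0, -1, 0;
         0, 0, 1, 0, 0, 0, -1;
         0, 1, 0, 0, 0, 0, -1] := by
    decide
  rw [h]
  exact d0

/-- In the matrix of Table 1, every row sum and every column sum
is even, the total sum of all entries is `-42`, which is not divisible by `4`;
hence, by Camion's criterion, any matrix containing it as a (sub)matrix is not
totally unimodular. -/
theorem tableMatrix_eulerian_not_div_four :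
    (∀ i, Even (∑ j, tableMatrix i j)) ∧
    (∀ j, Even (∑ i, tableMatrix i j)) ∧
    (∑ i, ∑ j, tableMatrix i j) = -42 ∧
    ¬ (4 : ℤ) ∣ (-42 : ℤ) ∧
    ∀ (m n : ℕ) (M : Matrix (Fin m) (Fin n) ℤ) (f : Fin 27 → Fin m) (g : Fin 27 → Fin n),
      Function.Injective f → Function.Injective g →
      (∀ i j, M (f i) (g j) = tableMatrix i j) →
      ¬ M.IsTotallyUnimodular := by
  refine ⟨by decide, by decide, by decide, by decide, ?_⟩
  intro m n M f g hf hg hMg hTU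
  have hsub : M.submatrix (f ∘ badRows) (g ∘ badCols) =
      tableMatrix.submatrix badRows badCols := by
    ext i j
    simp [Matrix.submatrix, hMg]
  have := hTU 7 (f ∘ badRows) (g ∘ badCols)
    (hf.comp badRows_inj) (hg.comp badCols_inj)
  rw [hsub, bad_det] at this
  obtain ⟨s, hs⟩ := this
  cases s <;> simp at hs
end
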